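/- With the notation of the I-PRO iteration below, and assuming ‖r_α‖² < ‖g‖² for every α > 0: for any starting value a₀ ∈ (0, μ*/2], the sequence (a_k)_{k ≥ 1} defined by a_{k+1} = the unique minimizer of T_{h(a_k)} over [0, μ*/2] is monotone, i.e., it is either monotonically nondecreasing or monotonically nonincreasing. -/

import Mathlib

open Matrix

lemma aux_posdef {n : ℕ} {B : Matrix (Fin n) (Fin n) ℝ} (hBp : B.PosSemidef) {α : ℝ} (hα : 0 < α) :
    (B + α • 1).PosDef := by
  have h1 : (α • (1 : Matrix (Fin n) (Fin n) ℝ)).PosDef := by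
    rw [smul_one_eq_diagonal]
    exact Matrix.PosDef.diagonal fun i => hα
  exact Matrix.PosDef.posSemidef_add hBp h1

lemma aux_resid {n m : ℕ} (A : Matrix (Fin n) (Fin m) ℝ) (g : Fin n → ℝ) {α : ℝ} (hα : 0 < α) :
    A *ᵥ ((Aᵀ * A + α • 1)⁻¹ *ᵥ (Aᵀ *ᵥ g)) - g = (-α) • ((A * Aᵀ + α • 1)⁻¹ *ᵥ g) := by
  have hM : (Aᵀ * A + α • 1).PosDef := by
    have := Matrix.posSemidef_conjTranspose_mul_self A
    rw [Matrix.conjTranspose_eq_transpose_of_trivial] at this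
    exact aux_posdef this hα
  have hN : (A * Aᵀ + α • 1).PosDef := by
    have := Matrix.posSemidef_self_mul_conjTranspose A
    rw [Matrix.conjTranspose_eq_transpose_of_trivial] at this
    exact aux_posdef this hα
  set M := Aᵀ * A + α • 1 with hMdef
  set N := A * Aᵀ + α • 1 with hNdef
  have hMdet : IsUnit M.det := (Matrix.isUnit_iff_isUnit_det _).mp hM.isUnit
  have hNdet : IsUnit N.det := (Matrix.isUnit_iff_isUnit_det _).mp hN.isUnit
  have hcomm : N * A = A * M := by
    rw [hMdef, hNdef, Matrix.add_mul, Matrix.mul_add, Matrix.smul_mul, Matrix.mul_smul,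
      Matrix.one_mul, Matrix.mul_one, Matrix.mul_assoc]
  have hstep : N * (A * M⁻¹ * Aᵀ - 1) = (-α) • 1 := by
    rw [Matrix.mul_sub, Matrix.mul_one, ← Matrix.mul_assoc, ← Matrix.mul_assoc, hcomm, Matrix.mul_assoc A M,
      Matrix.mul_nonsing_inv _ hMdet, Matrix.mul_one]
    rw [hNdef]
    rw [neg_smul]
    abel
  have key : A * M⁻¹ * Aᵀ - 1 = (-α) • N⁻¹ := by
    have h1 : A * M⁻¹ * Aᵀ - 1 = N⁻¹ * (N * (A * M⁻¹ * Aᵀ - 1)) := by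
      rw [← Matrix.mul_assoc, Matrix.nonsing_inv_mul _ hNdet, Matrix.one_mul]
    rw [h1, hstep, Matrix.mul_smul, mul_one]
  calc A *ᵥ ((M)⁻¹ *ᵥ (Aᵀ *ᵥ g)) - g
      = (A * M⁻¹ * Aᵀ - 1) *ᵥ g := by
        rw [Matrix.sub_mulVec, Matrix.one_mulVec, Matrix.mulVec_mulVec, Matrix.mulVec_mulVec]
    _ = (-α) • (N⁻¹ *ᵥ g) := by rw [key, Matrix.smul_mulVec]

lemma aux_orth {n : ℕ} {U : Matrix (Fin n) (Fin n) ℝ} (hU : star U * U = 1) (w : Fin n → ℝ) :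
    ∑ i, ((U *ᵥ w) i) ^ 2 = ∑ i, (w i) ^ 2 := by
  have hT : Uᵀ * U = 1 := by
    rwa [Matrix.star_eq_conjTranspose, Matrix.conjTranspose_eq_transpose_of_trivial] at hU
  have h1 : ∀ v : Fin n → ℝ, ∑ i, (v i) ^ 2 = v ⬝ᵥ v := by
    intro v; simp [dotProduct, pow_two]
  rw [h1, h1, Matrix.dotProduct_mulVec, ← Matrix.mulVec_transpose, Matrix.mulVec_mulVec, hT,
    Matrix.one_mulVec]

lemma aux_spec {n : ℕ} {B : Matrix (Fin n) (Fin n) ℝ} (hBp : B.PosSemidef) (g : Fin n → ℝ)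
    {α : ℝ} (hα : 0 < α) :
    ∑ i, (((-α) • ((B + α • 1)⁻¹ *ᵥ g)) i) ^ 2
      = ∑ i, (α / (hBp.1.eigenvalues i + α)) ^ 2 *
          ((star (hBp.1.eigenvectorUnitary : Matrix (Fin n) (Fin n) ℝ) *ᵥ g) i) ^ 2 := by
  set hB := hBp.1 with hhB
  set U : Matrix (Fin n) (Fin n) ℝ := (hB.eigenvectorUnitary : Matrix (Fin n) (Fin n) ℝ) with hUdef
  set d := hB.eigenvalues with hd
  have hdpos : ∀ i, 0 < d i + α := fun i => add_pos_of_nonneg_of_pos (hBp.eigenvalues_nonneg i) hα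
  have hUsU : U * star U = 1 := mem_unitaryGroup_iff.mp hB.eigenvectorUnitary.2
  have hsUU : star U * U = 1 := mem_unitaryGroup_iff'.mp hB.eigenvectorUnitary.2
  have hspec : B = U * diagonal d * star U := by
    have h := hB.spectral_theorem
    simpa using h
  have hconj : ∀ f f' : Fin n → ℝ, (U * diagonal f * star U) * (U * diagonal f' * star U)
      = U * (diagonal f * diagonal f') * star U := by
    intro f f'
    simp only [Matrix.mul_assoc]
    rw [← Matrix.mul_assoc (star U) U, hsUU, Matrix.one_mul]
  have hNdec : B + α • 1 = U * diagonal (fun i => d i + α) * star U := by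
    have h2 : diagonal (fun i => d i + α) = diagonal d + α • 1 := by
      rw [smul_one_eq_diagonal, ← diagonal_add]
    rw [h2, Matrix.mul_add, Matrix.add_mul, ← hspec, Matrix.mul_smul, Matrix.smul_mul, Matrix.mul_one, hUsU]
  have hinv : (B + α • 1)⁻¹ = U * diagonal (fun i => (d i + α)⁻¹) * star U := by
    apply Matrix.inv_eq_right_inv
    rw [hNdec, hconj, diagonal_mul_diagonal]
    have h3 : (fun i => (d i + α) * (d i + α)⁻¹) = fun _ : Fin n => (1 : ℝ) := by
      funext i; exact mul_inv_cancel₀ (hdpos i).ne'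
    rw [h3, diagonal_one, Matrix.mul_one, hUsU]
  have hvec : (-α) • ((B + α • 1)⁻¹ *ᵥ g)
      = U *ᵥ ((-α) • (diagonal (fun i => (d i + α)⁻¹) *ᵥ (star U *ᵥ g))) := by
    rw [hinv, ← Matrix.mulVec_mulVec, ← Matrix.mulVec_mulVec, Matrix.mulVec_smul]
  rw [hvec, aux_orth hsUU]
  apply Finset.sum_congr rfl
  intro i _
  have hi := hdpos i
  simp only [Pi.smul_apply, Matrix.mulVec_diagonal, smul_eq_mul]
  field_simp

theorem ipro_iteration_monotone (n m : ℕ)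
    (A : Matrix (Fin n) (Fin m) ℝ) (hA : A ≠ 0) (g : Fin n → ℝ)
    (hH : (Aᵀ * A).IsHermitian)
    (μ : Fin m → ℝ) (hμ : μ = hH.eigenvalues)
    (μs : ℝ) (hμs_mem : ∃ i, μ i = μs) (hμs_max : ∀ i, μ i ≤ μs) (hμs_pos : 0 < μs)
    (R : ℝ → ℝ)
    (hR : ∀ α : ℝ,
      R α = ∑ i, ((A *ᵥ ((Aᵀ * A + α • 1)⁻¹ *ᵥ (Aᵀ *ᵥ g)) - g) i) ^ 2)
    (G : ℝ) (hG : G = ∑ i, (g i) ^ 2)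
    (hres : ∀ α : ℝ, 0 < α → R α < G)
    (T : ℝ → ℝ → ℝ)
    (hT : ∀ c α' : ℝ, T c α' = (α' / (μs + α')) ^ 2 + c * ∑ i, (μ i) ^ 2 / (μ i + α') ^ 2)
    (mmin : ℝ → ℝ)
    (hm : ∀ c : ℝ, 0 < c →
      mmin c ∈ Set.Icc (0 : ℝ) (μs / 2) ∧
      IsMinOn (T c) (Set.Icc 0 (μs / 2)) (mmin c) ∧
      ∀ b ∈ Set.Icc (0 : ℝ) (μs / 2), IsMinOn (T c) (Set.Icc 0 (μs / 2)) b → b = mmin c)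
    (a : ℕ → ℝ) (ha0 : a 0 ∈ Set.Ioc (0 : ℝ) (μs / 2))
    (hrec : ∀ k : ℕ, a (k + 1) = mmin (R (a k) / (G - R (a k)))) :
    Monotone (fun k : ℕ => a (k + 1)) ∨ Antitone (fun k : ℕ => a (k + 1)) := by
  classical
  -- positivity of G
  have hR1nonneg : (0:ℝ) ≤ R 1 := by rw [hR]; positivity
  have hGpos : 0 < G := lt_of_le_of_lt hR1nonneg (hres 1 one_pos)
  -- spectral representation of R
  obtain ⟨d, gh, hd0, hgnz, hRform⟩ :
      ∃ d gh : Fin n → ℝ, (∀ i, 0 ≤ d i) ∧ (∃ i, gh i ≠ 0) ∧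
        ∀ α : ℝ, 0 < α → R α = ∑ i, (α / (d i + α)) ^ 2 * (gh i) ^ 2 := by
    have hBp : (A * Aᵀ).PosSemidef := by
      have h := Matrix.posSemidef_self_mul_conjTranspose A
      rwa [Matrix.conjTranspose_eq_transpose_of_trivial] at h
    refine ⟨hBp.1.eigenvalues,
      star (hBp.1.eigenvectorUnitary : Matrix (Fin n) (Fin n) ℝ) *ᵥ g,
      fun i => hBp.eigenvalues_nonneg i, ?_, ?_⟩
    · by_contra hcon
      push_neg at hcon
      have hgh0 : star (hBp.1.eigenvectorUnitary : Matrix (Fin n) (Fin n) ℝ) *ᵥ g = 0 :=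
        funext fun i => hcon i
      have hUsU : (hBp.1.eigenvectorUnitary : Matrix (Fin n) (Fin n) ℝ) *
          star (hBp.1.eigenvectorUnitary : Matrix (Fin n) (Fin n) ℝ) = 1 :=
        mem_unitaryGroup_iff.mp hBp.1.eigenvectorUnitary.2
      have hg0 : g = 0 := by
        have h1 : (hBp.1.eigenvectorUnitary : Matrix (Fin n) (Fin n) ℝ) *ᵥ
            (star (hBp.1.eigenvectorUnitary : Matrix (Fin n) (Fin n) ℝ) *ᵥ g) = g := by
          rw [Matrix.mulVec_mulVec, hUsU, Matrix.one_mulVec]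
        rw [hgh0, Matrix.mulVec_zero] at h1
        exact h1.symm
      rw [hG, hg0] at hGpos
      simp at hGpos
    · intro α hα
      rw [hR α]
      calc ∑ i, ((A *ᵥ ((Aᵀ * A + α • 1)⁻¹ *ᵥ (Aᵀ *ᵥ g)) - g) i) ^ 2
          = ∑ i, (((-α) • ((A * Aᵀ + α • 1)⁻¹ *ᵥ g)) i) ^ 2 := by
            rw [aux_resid A g hα]
        _ = _ := by
            rw [aux_spec hBp g hα]
  -- R is positive and monotone on (0, ∞)
  have hRpos : ∀ α : ℝ, 0 < α → 0 < R α := by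
    intro α hα
    rw [hRform α hα]
    obtain ⟨i₀, hi₀⟩ := hgnz
    apply Finset.sum_pos' (fun i _ => by positivity)
    refine ⟨i₀, Finset.mem_univ _, ?_⟩
    have h1 : 0 < d i₀ + α := add_pos_of_nonneg_of_pos (hd0 i₀) hα
    have h2 : 0 < (gh i₀) ^ 2 := by positivity
    positivity
  have hRmono : ∀ x y : ℝ, 0 < x → x ≤ y → R x ≤ R y := by
    intro x y hx hxy
    have hy : 0 < y := lt_of_lt_of_le hx hxy
    rw [hRform x hx, hRform y hy]
    apply Finset.sum_le_sum
    intro i _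
    have h1 : 0 < d i + x := add_pos_of_nonneg_of_pos (hd0 i) hx
    have h2 : 0 < d i + y := add_pos_of_nonneg_of_pos (hd0 i) hy
    have h3 : x / (d i + x) ≤ y / (d i + y) := by
      rw [div_le_div_iff₀ h1 h2]
      nlinarith [hd0 i]
    have h4 : 0 ≤ x / (d i + x) := by positivity
    exact mul_le_mul_of_nonneg_right (pow_le_pow_left₀ h4 h3 2) (sq_nonneg _)
  -- the weight function c(x) = R x / (G - R x)
  have hcpos : ∀ x : ℝ, 0 < x → 0 < R x / (G - R x) := by
    intro x hx
    exact div_pos (hRpos x hx) (by linarith [hres x hx])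
  have hcmono : ∀ x y : ℝ, 0 < x → x ≤ y →
      R x / (G - R x) ≤ R y / (G - R y) := by
    intro x y hx hxy
    have hy : 0 < y := lt_of_lt_of_le hx hxy
    have h1 : 0 < G - R x := by linarith [hres x hx]
    have h2 : 0 < G - R y := by linarith [hres y hy]
    rw [div_le_div_iff₀ h1 h2]
    have h3 := hRmono x y hx hxy
    have h4 := (hRpos x hx).le
    nlinarith
  -- eigenvalues of AᵀA are nonnegative
  have hμ0 : ∀ i, 0 ≤ μ i := by
    have hP1 : (Aᵀ * A).PosSemidef := by
      have h := Matrix.posSemidef_conjTranspose_mul_self A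
      rwa [Matrix.conjTranspose_eq_transpose_of_trivial] at h
    intro i
    rw [hμ]
    exact hP1.eigenvalues_nonneg i
  obtain ⟨j, hj⟩ := hμs_mem
  -- per-term monotonicity of P
  have hterm : ∀ (i : Fin m) (x y : ℝ), 0 ≤ x → x ≤ y →
      (μ i) ^ 2 / (μ i + y) ^ 2 ≤ (μ i) ^ 2 / (μ i + x) ^ 2 := by
    intro i x y hx hxy
    rcases eq_or_lt_of_le (hμ0 i) with h0 | h0
    · simp [← h0]
    · have hmx : 0 < μ i + x := by linarith
      have hmy : 0 < μ i + y := by linarith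
      have h1 : 0 < (μ i + x) ^ 2 := by positivity
      have h2 : 0 < (μ i + y) ^ 2 := by positivity
      rw [div_le_div_iff₀ h2 h1]
      have h5 : (μ i + x) ^ 2 ≤ (μ i + y) ^ 2 := by nlinarith
      exact mul_le_mul_of_nonneg_left h5 (sq_nonneg (μ i))
  -- strict antitonicity of P
  have hPanti : ∀ x y : ℝ, 0 ≤ x → x < y →
      (∑ i, (μ i) ^ 2 / (μ i + y) ^ 2) < ∑ i, (μ i) ^ 2 / (μ i + x) ^ 2 := by
    intro x y hx hxy
    apply Finset.sum_lt_sum (fun i _ => hterm i x y hx hxy.le)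
    refine ⟨j, Finset.mem_univ _, ?_⟩
    rw [hj]
    have hmx : 0 < μs + x := by linarith
    have hmy : 0 < μs + y := by linarith
    have h1 : 0 < (μs + x) ^ 2 := by positivity
    have h2 : 0 < (μs + y) ^ 2 := by positivity
    rw [div_lt_div_iff₀ h2 h1]
    have hss : 0 < μs ^ 2 := by positivity
    have h6 : (μs + x) ^ 2 < (μs + y) ^ 2 := by nlinarith
    exact (mul_lt_mul_iff_right₀ hss).mpr h6
  -- the minimizer is strictly positive
  have hmpos : ∀ c : ℝ, 0 < c → 0 < mmin c := by
    intro c hc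
    obtain ⟨hmem, hmin, -⟩ := hm c hc
    by_contra h0
    have hm0 : mmin c = 0 := le_antisymm (not_lt.mp h0) hmem.1
    set β : ℝ := min (μs / 2) (c * μs) with hβ
    have hβpos : 0 < β := lt_min (by linarith) (by positivity)
    have hβle : β ≤ μs / 2 := min_le_left _ _
    have hβle2 : β ≤ c * μs := min_le_right _ _
    have hkey : T c β < T c 0 := by
      rw [hT, hT]
      have hS0 : ((0:ℝ) / (μs + 0)) ^ 2 = 0 := by simp
      rw [hS0]
      -- split both sums at j
      rw [← Finset.sum_erase_add _ _ (Finset.mem_univ j),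
        ← Finset.sum_erase_add _ _ (Finset.mem_univ j)]
      have hE : (∑ i ∈ Finset.univ.erase j, (μ i) ^ 2 / (μ i + β) ^ 2)
          ≤ ∑ i ∈ Finset.univ.erase j, (μ i) ^ 2 / (μ i + 0) ^ 2 :=
        Finset.sum_le_sum fun i _ => hterm i 0 β le_rfl hβpos.le
      have hj0 : (μ j) ^ 2 / (μ j + 0) ^ 2 = 1 := by
        rw [hj, add_zero]
        exact div_self (by positivity)
      rw [hj0, hj]
      have hq : 0 < (μs + β) ^ 2 := by positivity
      have hmain : (β / (μs + β)) ^ 2 + c * (μs ^ 2 / (μs + β) ^ 2) < c := by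
        rw [div_pow, ← mul_div_assoc, ← add_div, div_lt_iff₀ hq]
        nlinarith [mul_le_mul_of_nonneg_right hβle2 hβpos.le,
          mul_pos hc (mul_pos hβpos hβpos)]
      set E1 : ℝ := ∑ i ∈ Finset.univ.erase j, (μ i) ^ 2 / (μ i + β) ^ 2
      set E0 : ℝ := ∑ i ∈ Finset.univ.erase j, (μ i) ^ 2 / (μ i + 0) ^ 2
      have hcE : c * E1 ≤ c * E0 := mul_le_mul_of_nonneg_left hE hc.le
      calc (β / (μs + β)) ^ 2 + c * (E1 + μs ^ 2 / (μs + β) ^ 2)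
          = (β / (μs + β)) ^ 2 + c * (μs ^ 2 / (μs + β) ^ 2) + c * E1 := by ring
        _ < c + c * E0 := by linarith
        _ = 0 + c * (E0 + 1) := by ring
    have hcontra := isMinOn_iff.mp hmin β ⟨hβpos.le, hβle⟩
    rw [hm0] at hcontra
    linarith
  -- monotonicity of the minimizer in c
  have hmmono : ∀ c₁ c₂ : ℝ, 0 < c₁ → c₁ ≤ c₂ → mmin c₁ ≤ mmin c₂ := by
    intro c₁ c₂ hc₁ hcc
    rcases eq_or_lt_of_le hcc with rfl | hlt
    · exact le_rfl
    have hc₂ : 0 < c₂ := lt_trans hc₁ hlt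
    obtain ⟨hmem₁, hmin₁, -⟩ := hm c₁ hc₁
    obtain ⟨hmem₂, hmin₂, -⟩ := hm c₂ hc₂
    by_contra hcon
    push_neg at hcon
    have h1 := isMinOn_iff.mp hmin₁ (mmin c₂) hmem₂
    have h2 := isMinOn_iff.mp hmin₂ (mmin c₁) hmem₁
    rw [hT, hT] at h1 h2
    have hP := hPanti (mmin c₂) (mmin c₁) hmem₂.1 hcon
    nlinarith
  -- all iterates lie in (0, μs/2]
  have hmem : ∀ k : ℕ, a k ∈ Set.Ioc (0:ℝ) (μs / 2) := by
    intro k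
    induction k with
    | zero => exact ha0
    | succ k ih =>
      rw [hrec k]
      have hc := hcpos (a k) ih.1
      exact ⟨hmpos _ hc, ((hm _ hc).1).2⟩
  have hstep : ∀ x y : ℝ, 0 < x → x ≤ y →
      mmin (R x / (G - R x)) ≤ mmin (R y / (G - R y)) :=
    fun x y hx hxy => hmmono _ _ (hcpos x hx) (hcmono x y hx hxy)
  rcases le_total (a 1) (a 2) with h12 | h21
  · left
    apply monotone_nat_of_le_succ
    intro k
    induction k with
    | zero => exact h12
    | succ k ih =>
      rw [hrec (k + 1), hrec (k + 2)]
      exact hstep _ _ (hmem (k + 1)).1 ih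
  · right
    apply antitone_nat_of_succ_le
    intro k
    induction k with
    | zero => exact h21
    | succ k ih =>
      rw [hrec (k + 1), hrec (k + 2)]
      exact hstep _ _ (hmem (k + 2)).1 ih
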